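/- arXiv:1707.01164 — 2 statements merged into one kernel-verified Lean document; each statement's English description precedes it below -/
import Mathlib

section
/- Let (Ω, ℱ₀, P) be a probability space, let 𝒢 ⊆ ℱ ⊆ ℱ₀ be nested sub-σ-algebras, and let Z : Ω → ℝ be square-integrable. Then E[Var(Z | ℱ)] = E[Var(Z | 𝒢)] if and only if E[Z | ℱ] = E[Z | 𝒢] almost surely. -/
open MeasureTheory

/-- The expected conditional variance `E[Var(Z | m)] = E[(Z − E[Z|m])²]` of a real-valued
random variable `Z` given a sub-σ-algebra `m`. -/
noncomputable def expCondVar {Ω : Type*} {m0 : MeasurableSpace Ω} (μ : Measure Ω)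
    (m : MeasurableSpace Ω) (Z : Ω → ℝ) : ℝ :=
  ∫ ω, (Z ω - (μ[Z|m]) ω) ^ 2 ∂μ

private lemma memℒp_two_condexp' {Ω : Type*} {m0 : MeasurableSpace Ω} {μ : Measure Ω}
    [IsProbabilityMeasure μ] {m : MeasurableSpace Ω} (hm : m ≤ m0) {Z : Ω → ℝ}
    (hZ : MemLp Z 2 μ) : MemLp (μ[Z|m]) 2 μ := by
  haveI : SigmaFinite (μ.trim hm) := by infer_instance
  have h : (condExpL2 ℝ ℝ hm (hZ.toLp Z) : Ω →₂[μ] ℝ) =ᵐ[μ] μ[Z|m] := by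
    refine ae_eq_condExp_of_forall_setIntegral_eq hm (hZ.integrable one_le_two)
      (fun s _ hμs => integrableOn_condExpL2_of_measure_ne_top hm hμs.ne _)
      (fun s hs hμs => ?_) (aestronglyMeasurable_condExpL2 hm _)
    rw [integral_condExpL2_eq hm (hZ.toLp Z) hs hμs.ne]
    exact integral_congr_ae (ae_restrict_of_ae hZ.coeFn_toLp)
  exact (Lp.memLp _).ae_eq h

/-- For nested sub-σ-algebras `𝒢 ⊆ ℱ ⊆ ℱ₀` and square-integrable `Z`,
`E[Var(Z | ℱ)] = E[Var(Z | 𝒢)]` if and only if `E[Z | ℱ] = E[Z | 𝒢]` almost surely. -/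
theorem expCondVar_eq_iff_condexp_ae_eq
    {Ω : Type*} {F0 : MeasurableSpace Ω} (μ : Measure Ω) [IsProbabilityMeasure μ]
    (G F : MeasurableSpace Ω) (hGF : G ≤ F) (hF : F ≤ F0)
    (Z : Ω → ℝ) (hZ : MemLp Z 2 μ) :
    expCondVar μ F Z = expCondVar μ G Z ↔ μ[Z|F] =ᵐ[μ] μ[Z|G] := by
  have hG0 : G ≤ F0 := hGF.trans hF
  haveI : SigmaFinite (μ.trim hF) := by infer_instance
  haveI : SigmaFinite (μ.trim hG0) := by infer_instance
  have hZ1 : Integrable Z μ := hZ.integrable one_le_two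
  have hF2 : MemLp (μ[Z|F]) 2 μ := memℒp_two_condexp' hF hZ
  have hG2 : MemLp (μ[Z|G]) 2 μ := memℒp_two_condexp' hG0 hZ
  have hA2 : MemLp (fun ω => Z ω - (μ[Z|F]) ω) 2 μ := hZ.sub hF2
  have hB2 : MemLp (fun ω => (μ[Z|F]) ω - (μ[Z|G]) ω) 2 μ := hF2.sub hG2
  have hA1 : Integrable (fun ω => Z ω - (μ[Z|F]) ω) μ := hA2.integrable one_le_two
  have hBA : Integrable (fun ω => ((μ[Z|F]) ω - (μ[Z|G]) ω) * (Z ω - (μ[Z|F]) ω)) μ := by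
    have := hA2.smul (φ := fun ω => (μ[Z|F]) ω - (μ[Z|G]) ω) hB2
      (p := 2) (q := 2) (r := 1)
      (hpqr := ⟨by simp only [ENNReal.inv_two_add_inv_two, inv_one]⟩)
    rwa [memLp_one_iff_integrable] at this
  have hBmeas : AEStronglyMeasurable[F] (fun ω => (μ[Z|F]) ω - (μ[Z|G]) ω) μ :=
    (stronglyMeasurable_condExp.sub (stronglyMeasurable_condExp.mono hGF)).aestronglyMeasurable
  have hAcond : μ[fun ω => Z ω - (μ[Z|F]) ω|F] =ᵐ[μ] 0 := by
    have h1 : μ[fun ω => Z ω - (μ[Z|F]) ω|F] =ᵐ[μ] μ[Z|F] - μ[μ[Z|F]|F] :=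
      condExp_sub hZ1 integrable_condExp F
    have h2 : μ[μ[Z|F]|F] = μ[Z|F] :=
      condExp_of_stronglyMeasurable hF stronglyMeasurable_condExp integrable_condExp
    filter_upwards [h1] with ω hω
    simp only [Pi.sub_apply, h2] at hω
    simpa using hω
  have hIBA : ∫ ω, ((μ[Z|F]) ω - (μ[Z|G]) ω) * (Z ω - (μ[Z|F]) ω) ∂μ = 0 := by
    have h3 := condExp_mul_of_aestronglyMeasurable_left (m := F) hBmeas
      (by exact hBA) hA1
    have h4 : (fun ω => (μ[Z|F]) ω - (μ[Z|G]) ω) * μ[fun ω => Z ω - (μ[Z|F]) ω|F]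
        =ᵐ[μ] 0 := by
      filter_upwards [hAcond] with ω hω
      simp [Pi.mul_apply, hω]
    calc ∫ ω, ((μ[Z|F]) ω - (μ[Z|G]) ω) * (Z ω - (μ[Z|F]) ω) ∂μ
        = ∫ ω, (μ[(fun ω => (μ[Z|F]) ω - (μ[Z|G]) ω) * (fun ω => Z ω - (μ[Z|F]) ω)|F]) ω ∂μ :=
          (integral_condExp hF).symm
      _ = 0 := by
          rw [integral_congr_ae (h3.trans h4)]; simp
  have hBsq : Integrable (fun ω => ((μ[Z|F]) ω - (μ[Z|G]) ω) ^ 2) μ := hB2.integrable_sq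
  have hAsq : Integrable (fun ω => (Z ω - (μ[Z|F]) ω) ^ 2) μ := hA2.integrable_sq
  have hexp : expCondVar μ G Z = expCondVar μ F Z + ∫ ω, ((μ[Z|F]) ω - (μ[Z|G]) ω) ^ 2 ∂μ := by
    have hpt : ∀ ω, (Z ω - (μ[Z|G]) ω) ^ 2 =
        (Z ω - (μ[Z|F]) ω) ^ 2 +
          (2 * (((μ[Z|F]) ω - (μ[Z|G]) ω) * (Z ω - (μ[Z|F]) ω)) +
            ((μ[Z|F]) ω - (μ[Z|G]) ω) ^ 2) := by
      intro ω; ring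
    have h5 : Integrable (fun ω => 2 * (((μ[Z|F]) ω - (μ[Z|G]) ω) * (Z ω - (μ[Z|F]) ω)) +
        ((μ[Z|F]) ω - (μ[Z|G]) ω) ^ 2) μ := (hBA.const_mul 2).add hBsq
    have h6 : Integrable (fun ω => 2 * (((μ[Z|F]) ω - (μ[Z|G]) ω) * (Z ω - (μ[Z|F]) ω))) μ :=
      hBA.const_mul 2
    rw [expCondVar, expCondVar]
    simp_rw [hpt]
    rw [integral_add hAsq h5, integral_add h6 hBsq, integral_const_mul, hIBA]
    ring
  rw [hexp]
  constructor
  · intro h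
    have h0 : ∫ ω, ((μ[Z|F]) ω - (μ[Z|G]) ω) ^ 2 ∂μ = 0 := by linarith
    have h1 := (integral_eq_zero_iff_of_nonneg (fun ω => sq_nonneg _) hBsq).mp h0
    filter_upwards [h1] with ω hω
    have : ((μ[Z|F]) ω - (μ[Z|G]) ω) ^ 2 = 0 := hω
    have := pow_eq_zero_iff (two_ne_zero) |>.mp this
    linarith
  · intro h
    have : ∫ ω, ((μ[Z|F]) ω - (μ[Z|G]) ω) ^ 2 ∂μ = 0 := by
      have h0 : (fun ω => ((μ[Z|F]) ω - (μ[Z|G]) ω) ^ 2) =ᵐ[μ] (fun _ => (0 : ℝ)) := by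
        filter_upwards [h] with ω hω
        simp [hω]
      rw [integral_congr_ae h0]; simp
    linarith
end

section
/- Let n, p, q be positive integers, let Φ be a real n × p matrix and Ψ a real n × q matrix (interpreted as centered feature and response matrices whose rows are samples), and let ε > 0. Define the empirical covariance matrices Σ̂_XX = (1/n) Φᵀ Φ, Σ̂_XY = (1/n) Φᵀ Ψ, Σ̂_YX = (1/n) Ψᵀ Φ, Σ̂_YY = (1/n) Ψᵀ Ψ, and the Gram matrices G_X = Φ Φᵀ and G_Y = Ψ Ψᵀ. Then Tr[Σ̂_YY − Σ̂_YX (Σ̂_XX + ε I_p)⁻¹ Σ̂_XY] = ε · Tr[G_Y (G_X + n ε I_n)⁻¹], where all inverses exist since the matrices being inverted are positive definite. -/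
open Matrix

lemma aux_smul_one_posDef {m : Type*} [Fintype m] [DecidableEq m] [Nonempty m]
    {c : ℝ} (hc : 0 < c) : (c • (1 : Matrix m m ℝ)).PosDef := by
  rw [← Matrix.diagonal_one, ← Matrix.diagonal_smul]
  exact (Matrix.posDef_diagonal_iff).2 fun i => by simpa using hc

lemma aux_smul_posSemidef {m : Type*} [Fintype m]
    {c : ℝ} (hc : 0 ≤ c) {A : Matrix m m ℝ} (hA : A.PosSemidef) :
    (c • A).PosSemidef := by
  refine ⟨?_, fun x => ?_⟩
  · unfold Matrix.IsHermitian at *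
    rw [Matrix.conjTranspose_smul, hA.1]
    simp
  · simpa [Finsupp.mul_sum, mul_assoc, mul_left_comm] using smul_nonneg hc (hA.2 x)

/-- The regularized empirical estimate of the trace of the conditional covariance
operator can be computed from Gram matrices: with `Σ̂_XX = (1/n) Φᵀ Φ`,
`Σ̂_XY = (1/n) Φᵀ Ψ`, `Σ̂_YX = (1/n) Ψᵀ Φ`, `Σ̂_YY = (1/n) Ψᵀ Ψ`, `G_X = Φ Φᵀ` and
`G_Y = Ψ Ψᵀ`, one has
`Tr[Σ̂_YY − Σ̂_YX (Σ̂_XX + ε I_p)⁻¹ Σ̂_XY] = ε Tr[G_Y (G_X + n ε I_n)⁻¹]`,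
the matrices being inverted being positive definite (hence invertible). -/
theorem empirical_conditional_covariance_trace_identity
    (n p q : ℕ) (hn : 0 < n) (hp : 0 < p) (hq : 0 < q)
    (Φ : Matrix (Fin n) (Fin p) ℝ) (Ψ : Matrix (Fin n) (Fin q) ℝ)
    (ε : ℝ) (hε : 0 < ε) :
    ((n : ℝ)⁻¹ • (Φᵀ * Φ) + ε • (1 : Matrix (Fin p) (Fin p) ℝ)).PosDef ∧
    (Φ * Φᵀ + ((n : ℝ) * ε) • (1 : Matrix (Fin n) (Fin n) ℝ)).PosDef ∧
    ((n : ℝ)⁻¹ • (Ψᵀ * Ψ)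
        - ((n : ℝ)⁻¹ • (Ψᵀ * Φ))
            * ((n : ℝ)⁻¹ • (Φᵀ * Φ) + ε • (1 : Matrix (Fin p) (Fin p) ℝ))⁻¹
            * ((n : ℝ)⁻¹ • (Φᵀ * Ψ))).trace
      = ε * ((Ψ * Ψᵀ)
          * (Φ * Φᵀ + ((n : ℝ) * ε) • (1 : Matrix (Fin n) (Fin n) ℝ))⁻¹).trace := by
  haveI : Nonempty (Fin p) := ⟨⟨0, hp⟩⟩
  haveI : Nonempty (Fin n) := ⟨⟨0, hn⟩⟩
  have hn' : (0 : ℝ) < (n : ℝ) := by exact_mod_cast hn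
  have hn0 : (n : ℝ) ≠ 0 := ne_of_gt hn'
  set c : ℝ := (n : ℝ) * ε with hc
  have hcpos : 0 < c := mul_pos hn' hε
  -- PosSemidef facts
  have hΦΦ : (Φᵀ * Φ).PosSemidef := by
    have := Matrix.posSemidef_conjTranspose_mul_self Φ
    simpa using this
  have hΦΦ' : (Φ * Φᵀ).PosSemidef := by
    have := Matrix.posSemidef_self_mul_conjTranspose Φ
    simpa using this
  -- the three PosDef statements
  set A : Matrix (Fin p) (Fin p) ℝ := Φᵀ * Φ + c • 1 with hAdef
  set B : Matrix (Fin n) (Fin n) ℝ := Φ * Φᵀ + c • 1 with hBdef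
  have hA : A.PosDef :=
    Matrix.PosDef.posSemidef_add hΦΦ (aux_smul_one_posDef hcpos)
  have hB : B.PosDef :=
    Matrix.PosDef.posSemidef_add hΦΦ' (aux_smul_one_posDef hcpos)
  have hscale : (n : ℝ)⁻¹ • (Φᵀ * Φ) + ε • (1 : Matrix (Fin p) (Fin p) ℝ)
      = (n : ℝ)⁻¹ • A := by
    rw [hAdef, smul_add, smul_smul, hc]
    rw [inv_mul_cancel_left₀ hn0]
  have h1 : ((n : ℝ)⁻¹ • (Φᵀ * Φ) + ε • (1 : Matrix (Fin p) (Fin p) ℝ)).PosDef := by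
    rw [hscale]
    refine ⟨?_, fun x hx => ?_⟩
    · unfold Matrix.IsHermitian at *
      rw [Matrix.conjTranspose_smul, hA.1]; simp
    · simpa [Finsupp.mul_sum, mul_assoc, mul_left_comm] using smul_pos (show (0 : ℝ) < (n : ℝ)⁻¹ by positivity) (hA.2 hx)
  refine ⟨h1, hB, ?_⟩
  -- invertibility
  have hAdet : IsUnit A.det := hA.det_pos.ne'.isUnit
  have hBdet : IsUnit B.det := hB.det_pos.ne'.isUnit
  -- push-through identity
  have push : B * Φ = Φ * A := by
    rw [hAdef, hBdef]
    simp [Matrix.add_mul, Matrix.mul_add, Matrix.mul_assoc, Matrix.smul_mul,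
      Matrix.mul_smul]
  have push' : B⁻¹ * Φ = Φ * A⁻¹ := by
    have := congrArg (fun M => B⁻¹ * M * A⁻¹) push
    simp only [Matrix.mul_assoc] at this
    rw [Matrix.mul_nonsing_inv _ hAdet, Matrix.mul_one] at this
    rw [← Matrix.mul_assoc, Matrix.nonsing_inv_mul _ hBdet, Matrix.one_mul] at this
    exact this.symm
  have key : Φ * A⁻¹ * Φᵀ = 1 - c • B⁻¹ := by
    have hBB : Φ * Φᵀ = B - c • 1 := by rw [hBdef]; abel
    calc Φ * A⁻¹ * Φᵀ = B⁻¹ * Φ * Φᵀ := by rw [push']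
      _ = B⁻¹ * (B - c • 1) := by rw [Matrix.mul_assoc, hBB]
      _ = 1 - c • B⁻¹ := by
          rw [Matrix.mul_sub, Matrix.nonsing_inv_mul _ hBdet, Matrix.mul_smul,
            Matrix.mul_one]
  -- inverse of scaled matrix
  have hinv : ((n : ℝ)⁻¹ • A)⁻¹ = (n : ℝ) • A⁻¹ := by
    refine Matrix.inv_eq_right_inv ?_
    rw [Matrix.smul_mul, Matrix.mul_smul, Matrix.mul_nonsing_inv _ hAdet, smul_smul,
      inv_mul_cancel₀ hn0, one_smul]
  -- collapse the scalar factors in the middle term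
  have hmid : ((n : ℝ)⁻¹ • (Ψᵀ * Φ)) * ((n : ℝ) • A⁻¹) * ((n : ℝ)⁻¹ • (Φᵀ * Ψ))
      = (n : ℝ)⁻¹ • (Ψᵀ * (Φ * A⁻¹ * Φᵀ) * Ψ) := by
    simp only [Matrix.smul_mul, Matrix.mul_smul, smul_smul, Matrix.mul_assoc]
    congr 1
    field_simp
  rw [hscale, hinv, hmid, key]
  have expand : Ψᵀ * (1 - c • B⁻¹) * Ψ = Ψᵀ * Ψ - c • (Ψᵀ * B⁻¹ * Ψ) := by
    simp [Matrix.mul_sub, Matrix.sub_mul, Matrix.mul_smul, Matrix.smul_mul,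
      Matrix.mul_assoc]
  rw [expand, smul_sub, sub_sub_cancel, Matrix.trace_smul, Matrix.trace_smul,
    Matrix.trace_mul_cycle Ψᵀ B⁻¹ Ψ]
  rw [smul_smul, smul_eq_mul, hc]
  field_simp
end
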